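/- Let G = (U,α) and H = (V,β) be fully supported weighted graphs and let c : U × V → [0,∞) be a cost function. If γ ∈ J*(α,β) (the set of weight joinings minimizing ⟨c, r_γ⟩ over J(α,β)) is bijective, then γ is an extreme point of J*(α,β). -/
import Mathlib


open Finset

def IsWeightFunction {U : Type*} [Fintype U] (α : U → U → ℝ) : Prop :=
  (∀ u u', 0 ≤ α u u') ∧ (∀ u u', α u u' = α u' u) ∧ (∑ u, ∑ u', α u u' = 1)

noncomputable def marginal {U : Type*} [Fintype U] (α : U → U → ℝ) (u : U) : ℝ :=
  ∑ u', α u u'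

def IsWeightJoining {U V : Type*} [Fintype U] [Fintype V]
    (α : U → U → ℝ) (β : V → V → ℝ) (γ : U × V → U × V → ℝ) : Prop :=
  IsWeightFunction γ ∧
  (∀ u, ∑ v, marginal γ (u, v) = marginal α u) ∧
  (∀ v, ∑ u, marginal γ (u, v) = marginal β v) ∧
  (∀ u u' v, marginal α u * ∑ v', γ (u, v) (u', v') = α u u' * marginal γ (u, v)) ∧
  (∀ v v' u, marginal β v * ∑ u', γ (u, v) (u', v') = β v v' * marginal γ (u, v))

def weightJoinings {U V : Type*} [Fintype U] [Fintype V]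
    (α : U → U → ℝ) (β : V → V → ℝ) : Set (U × V → U × V → ℝ) :=
  {γ | IsWeightJoining α β γ}

noncomputable def ogjCost {U V : Type*} [Fintype U] [Fintype V]
    (c : U → V → ℝ) (γ : U × V → U × V → ℝ) : ℝ :=
  ∑ p : U × V, c p.1 p.2 * marginal γ p

/-- A weight joining is bijective if each `u ∈ U` has a unique `v ∈ V` with positive
joint marginal and vice versa. -/
def IsBijectiveJoining {U V : Type*} [Fintype U] [Fintype V]
    (γ : U × V → U × V → ℝ) : Prop :=
  (∀ u : U, ∃! v : V, 0 < marginal γ (u, v)) ∧ (∀ v : V, ∃! u : U, 0 < marginal γ (u, v))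

/-- `γ` is an extreme point of the convex set `C`. -/
def IsExtremePointOf {X : Type*} [AddCommGroup X] [Module ℝ X] (C : Set X) (γ : X) : Prop :=
  γ ∈ C ∧ ∀ γ₁ ∈ C, ∀ γ₂ ∈ C, ∀ t : ℝ, 0 < t → t < 1 →
    γ = t • γ₁ + (1 - t) • γ₂ → γ = γ₁ ∧ γ = γ₂

/-- The set `J*(α,β)` of weight joinings minimizing the cost `⟨c, r_γ⟩`. -/
def optimalJoinings {U V : Type*} [Fintype U] [Fintype V]
    (α : U → U → ℝ) (β : V → V → ℝ) (c : U → V → ℝ) : Set (U × V → U × V → ℝ) :=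
  {γ ∈ weightJoinings α β | ∀ γ' ∈ weightJoinings α β, ogjCost c γ ≤ ogjCost c γ'}

open Classical in
lemma joining_determined {U V : Type*} [Fintype U] [Fintype V]
    (α : U → U → ℝ) (β : V → V → ℝ)
    (hαfull : ∀ u, 0 < marginal α u) (φ : U → V)
    (δ : U × V → U × V → ℝ) (hδ : IsWeightJoining α β δ)
    (hm0 : ∀ u v, v ≠ φ u → marginal δ (u, v) = 0) :
    ∀ u v u' v', δ (u, v) (u', v') = if v = φ u ∧ v' = φ u' then α u u' else 0 := by
  obtain ⟨⟨hnn, hsym, _⟩, hU, _, htc, _⟩ := hδ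
  have hz1 : ∀ u v x, v ≠ φ u → δ (u, v) x = 0 := by
    intro u v x hv
    have h0 := hm0 u v hv
    rw [marginal] at h0
    exact (Finset.sum_eq_zero_iff_of_nonneg (fun y _ => hnn _ y)).mp h0 x (Finset.mem_univ x)
  have hz2 : ∀ u v u' v', v' ≠ φ u' → δ (u, v) (u', v') = 0 := by
    intro u v u' v' hv'
    rw [hsym]; exact hz1 u' v' _ hv'
  have hmg : ∀ u, marginal δ (u, φ u) = marginal α u := by
    intro u
    have h := hU u
    rwa [Finset.sum_eq_single (φ u) (fun v _ hv => hm0 u v hv)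
      (fun h => absurd (Finset.mem_univ _) h)] at h
  intro u v u' v'
  by_cases h1 : v = φ u
  · by_cases h2 : v' = φ u'
    · subst h1; subst h2
      rw [if_pos ⟨rfl, rfl⟩]
      have key := htc u u' (φ u)
      rw [hmg u] at key
      have hsum : ∑ v'' : V, δ (u, φ u) (u', v'') = δ (u, φ u) (u', φ u') :=
        Finset.sum_eq_single (φ u') (fun b _ hb => hz2 u (φ u) u' b hb)
          (fun h => absurd (Finset.mem_univ _) h)
      rw [hsum] at key
      exact mul_left_cancel₀ (hαfull u).ne' (key.trans (mul_comm _ _))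
    · rw [if_neg (by tauto), hz2 u v u' v' h2]
  · rw [if_neg (by tauto), hz1 u v _ h1]

/-- For fully supported weighted graphs and a nonnegative cost `c`,
any bijective optimal weight joining `γ ∈ J*(α,β)` is an extreme point of `J*(α,β)`. -/
theorem bijective_optimal_joining_is_extreme
    {U V : Type*} [Fintype U] [Fintype V]
    (α : U → U → ℝ) (β : V → V → ℝ)
    (hα : IsWeightFunction α) (hβ : IsWeightFunction β)
    (hαfull : ∀ u, 0 < marginal α u) (hβfull : ∀ v, 0 < marginal β v)
    (c : U → V → ℝ) (hc : ∀ u v, 0 ≤ c u v)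
    (γ : U × V → U × V → ℝ)
    (hγ : γ ∈ optimalJoinings α β c)
    (hbij : IsBijectiveJoining γ) :
    IsExtremePointOf (optimalJoinings α β c) γ := by
  obtain ⟨hγjm, hγopt⟩ := hγ
  have hγj : IsWeightJoining α β γ := hγjm
  refine ⟨⟨hγjm, hγopt⟩, ?_⟩
  intro γ₁ hγ₁ γ₂ hγ₂ t ht0 ht1 heq
  have hγ₁j : IsWeightJoining α β γ₁ := hγ₁.1
  have hγ₂j : IsWeightJoining α β γ₂ := hγ₂.1
  -- the bijection
  choose φ hφpos hφuniq using hbij.1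
  -- nonnegativity of marginals
  have hnn : ∀ (δ : U × V → U × V → ℝ), IsWeightJoining α β δ →
      ∀ x, 0 ≤ marginal δ x := by
    intro δ hδ x
    exact Finset.sum_nonneg fun y _ => hδ.1.1 x y
  have hm0γ : ∀ u v, v ≠ φ u → marginal γ (u, v) = 0 := by
    intro u v hv
    by_contra h
    exact hv (hφuniq u v (lt_of_le_of_ne (hnn γ hγj (u, v)) (Ne.symm h)))
  -- linearity of marginal
  have hlin : ∀ x, marginal γ x = t * marginal γ₁ x + (1 - t) * marginal γ₂ x := by
    intro x
    simp only [marginal, heq, Pi.add_apply, Pi.smul_apply, smul_eq_mul,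
      Finset.sum_add_distrib, Finset.mul_sum]
  have hm01 : ∀ u v, v ≠ φ u → marginal γ₁ (u, v) = 0 := by
    intro u v hv
    have h0 := hm0γ u v hv
    rw [hlin (u, v)] at h0
    have h1 := hnn γ₁ hγ₁j (u, v)
    have h2 := hnn γ₂ hγ₂j (u, v)
    nlinarith
  have hm02 : ∀ u v, v ≠ φ u → marginal γ₂ (u, v) = 0 := by
    intro u v hv
    have h0 := hm0γ u v hv
    rw [hlin (u, v)] at h0
    have h1 := hnn γ₁ hγ₁j (u, v)
    have h2 := hnn γ₂ hγ₂j (u, v)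
    nlinarith
  have d := joining_determined α β hαfull φ γ hγj hm0γ
  have d1 := joining_determined α β hαfull φ γ₁ hγ₁j hm01
  have d2 := joining_determined α β hαfull φ γ₂ hγ₂j hm02
  constructor <;>
  · funext x y
    obtain ⟨u, v⟩ := x; obtain ⟨u', v'⟩ := y
    first
      | rw [d u v u' v', d1 u v u' v']
      | rw [d u v u' v', d2 u v u' v']
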